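/- For every valid non-final configuration c and every action τ ∈ dyna(c), the optimal tree is preserved: t*(τ(c)) = t*(c). (Lemma 3, first part.) -/

import Mathlib

/-!
Formalization of the span-based Structure/Label transition parsing system of
Cross & Huang (2016), "Span-Based Constituency Parsing with a Structure-Label
System and Provably Optimal Dynamic Oracles".

A configuration is `(z, σ, t)` where `z` is the step number, `σ` the stack of
span boundaries and `t` the set of brackets built so far.  A bracket is a
triple `(X, i, j)` with `X` a nonterminal label and `i < j ≤ n` a span.
-/

namespace SpanParser

structure Config (N : Type*) where
  z : ℕ
  σ : List ℕ
  t : Finset (N × ℕ × ℕ)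

variable {N : Type*}

/-- The span of a bracket. -/
def span (b : N × ℕ × ℕ) : ℕ × ℕ := b.2

/-- Top (rightmost) boundary of the stack. -/
def topJ (σ : List ℕ) : ℕ := σ.getLastD 0

/-- Second-to-top boundary of the stack. -/
def topI (σ : List ℕ) : ℕ := σ.dropLast.getLastD 0

/-- Parser actions: shift, combine, label-`X`, and nolabel. -/
inductive Action (N : Type*) where
  | sh : Action N
  | comb : Action N
  | label : N → Action N
  | nolabel : Action N

variable [DecidableEq N]

/-- Applicability of an action at a configuration (for sentence length `n`). -/
def App (n : ℕ) (c : Config N) : Action N → Prop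
  | .sh      => Even c.z ∧ c.σ ≠ [] ∧ topJ c.σ < n
  | .comb    => Even c.z ∧ 3 ≤ c.σ.length
  | .label _ => Odd c.z ∧ 2 ≤ c.σ.length
  | .nolabel => Odd c.z ∧ 2 ≤ c.σ.length ∧ c.z < 4 * n - 1

/-- The result `τ(c)` of applying action `τ` to configuration `c`. -/
def doAct (c : Config N) : Action N → Config N
  | .sh      => ⟨c.z + 1, c.σ ++ [topJ c.σ + 1], c.t⟩
  | .comb    => ⟨c.z + 1, c.σ.dropLast.dropLast ++ [topJ c.σ], c.t⟩
  | .label X => ⟨c.z + 1, c.σ, insert (X, topI c.σ, topJ c.σ) c.t⟩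
  | .nolabel => ⟨c.z + 1, c.σ, c.t⟩

/-- The initial configuration `(0, [0], ∅)`. -/
def initial (N : Type*) : Config N := ⟨0, [0], ∅⟩

/-- One transition step `c ⊢ c'`. -/
def Step (n : ℕ) (c c' : Config N) : Prop := ∃ a, App n c a ∧ c' = doAct c a

/-- `⊢*`: reflexive-transitive closure of the transition relation. -/
def Reaches (n : ℕ) : Config N → Config N → Prop := Relation.ReflTransGen (Step n)

/-- A configuration is valid if it is reachable from the initial configuration. -/
def Valid (n : ℕ) (c : Config N) : Prop := Reaches n (initial N) c

/-- A final configuration: `σ = [0, n]` and `z = 4n - 2`. -/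
def Final (n : ℕ) (c : Config N) : Prop := c.σ = [0, n] ∧ c.z = 4 * n - 2

/-- `D(c)`: the set of trees of final configurations reachable from `c`. -/
def Dset (n : ℕ) (c : Config N) : Set (Finset (N × ℕ × ℕ)) :=
  {t' | ∃ c', Reaches n c c' ∧ Final n c' ∧ c'.t = t'}

/-- `(i,j) ⪯ (p,q)`: span `(i,j)` is encompassed by `(p,q)`, i.e. `p ≤ i < j ≤ q`. -/
def Enc (s₁ s₂ : ℕ × ℕ) : Prop := s₂.1 ≤ s₁.1 ∧ s₁.1 < s₁.2 ∧ s₁.2 ≤ s₂.2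

/-- `(i,j) ≺ (p,q)`: strict encompassment. -/
def SEnc (s₁ s₂ : ℕ × ℕ) : Prop := Enc s₁ s₂ ∧ s₁ ≠ s₂

/-- `tG` is a gold tree for sentence length `n`: valid spans, pairwise-distinct
spans, pairwise non-crossing spans, and exactly one bracket with span `(0, n)`
(uniqueness follows from distinctness of spans). -/
structure IsGold (n : ℕ) (tG : Finset (N × ℕ × ℕ)) : Prop where
  validSpans : ∀ b ∈ tG, (span b).1 < (span b).2 ∧ (span b).2 ≤ n
  distinctSpans : ∀ b₁ ∈ tG, ∀ b₂ ∈ tG, span b₁ = span b₂ → b₁ = b₂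
  noncrossing : ∀ b₁ ∈ tG, ∀ b₂ ∈ tG,
    Enc (span b₁) (span b₂) ∨ Enc (span b₂) (span b₁) ∨
    (span b₁).2 ≤ (span b₂).1 ∨ (span b₂).2 ≤ (span b₁).1
  root : ∃ X, (X, 0, n) ∈ tG

open Classical in
/-- `left(c)`: gold brackets (strictly, at even steps) encompassing the top
span whose left boundary occurs on the stack. -/
noncomputable def leftSet (tG : Finset (N × ℕ × ℕ)) (c : Config N) :
    Finset (N × ℕ × ℕ) :=
  tG.filter fun b =>
    (if Even c.z then SEnc (topI c.σ, topJ c.σ) (span b)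
     else Enc (topI c.σ, topJ c.σ) (span b)) ∧ (span b).1 ∈ c.σ

open Classical in
/-- `right(c)`: gold brackets entirely on the queue. -/
noncomputable def rightSet (tG : Finset (N × ℕ × ℕ)) (c : Config N) :
    Finset (N × ℕ × ℕ) :=
  tG.filter fun b => topJ c.σ ≤ (span b).1

open Classical in
/-- `reach(c)`: the reachable gold brackets (all of `t_G` at the initial
configuration, whose stack has fewer than two boundaries). -/
noncomputable def reach (tG : Finset (N × ℕ × ℕ)) (c : Config N) :
    Finset (N × ℕ × ℕ) :=
  if c.σ.length < 2 then tG else leftSet tG c ∪ rightSet tG c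

/-- The optimal tree `t*(c) = t ∪ reach(c)`. -/
noncomputable def tstar (tG : Finset (N × ℕ × ℕ)) (c : Config N) :
    Finset (N × ℕ × ℕ) :=
  c.t ∪ reach tG c

/-- `b = next(c)`: the `≺`-minimal element of `left(c)`. -/
def IsNext (tG : Finset (N × ℕ × ℕ)) (c : Config N) (b : N × ℕ × ℕ) : Prop :=
  b ∈ leftSet tG c ∧ ∀ b' ∈ leftSet tG c, Enc (span b) (span b')

/-- The dynamic-oracle policy `dyna(c)` as a predicate on actions. -/
def Dyna (tG : Finset (N × ℕ × ℕ)) (c : Config N) (a : Action N) : Prop :=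
  if c.σ.length < 2 then a = Action.sh
  else if Even c.z then
    ∃ b, IsNext tG c b ∧
      (((span b).1 = topI c.σ ∧ topJ c.σ < (span b).2 ∧ a = Action.sh) ∨
       ((span b).1 < topI c.σ ∧ (span b).2 = topJ c.σ ∧ a = Action.comb) ∨
       ((span b).1 < topI c.σ ∧ topJ c.σ < (span b).2 ∧
          (a = Action.sh ∨ a = Action.comb)))
  else
    (∃ X, (X, topI c.σ, topJ c.σ) ∈ tG ∧ a = Action.label X) ∨
    ((∀ X, (X, topI c.σ, topJ c.σ) ∉ tG) ∧ a = Action.nolabel)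

/-- `F1` of a predicted bracket set `t'` against the gold tree `tG`
(`0` when `t' ∩ tG = ∅`). -/
noncomputable def f1 (tG t' : Finset (N × ℕ × ℕ)) : ℝ :=
  if t' ∩ tG = ∅ then 0
  else
    (2 * (((t' ∩ tG).card : ℝ) / (tG.card : ℝ)) * (((t' ∩ tG).card : ℝ) / (t'.card : ℝ))) /
      ((((t' ∩ tG).card : ℝ) / (tG.card : ℝ)) + (((t' ∩ tG).card : ℝ) / (t'.card : ℝ)))

/-- `F1(c)`: the best `F1` among trees reachable from `c`. -/
noncomputable def configF1 (n : ℕ) (tG : Finset (N × ℕ × ℕ)) (c : Config N) : ℝ :=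
  sSup (f1 tG '' Dset n c)

/-- A run of (applicable) actions from one configuration to another. -/
inductive Run (n : ℕ) : Config N → List (Action N) → Config N → Prop
  | refl (c : Config N) : Run n c [] c
  | step {c c' : Config N} {as : List (Action N)} (a : Action N)
      (happ : App n c a) (h : Run n (doAct c a) as c') : Run n c (a :: as) c'

/-- A run all of whose actions follow the dynamic oracle. -/
inductive DynaRun (n : ℕ) (tG : Finset (N × ℕ × ℕ)) : Config N → Config N → Prop
  | refl (c : Config N) : DynaRun n tG c c
  | step {c c' : Config N} (a : Action N) (happ : App n c a) (hdyna : Dyna tG c a)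
      (h : DynaRun n tG (doAct c a) c') : DynaRun n tG c c'

def isSh : Action N → Bool
  | .sh => true
  | _ => false

def isComb : Action N → Bool
  | .comb => true
  | _ => false

/-- Label-step actions: `label-X` or `nolabel`. -/
def isLabelStep : Action N → Bool
  | .label _ => true
  | .nolabel => true
  | _ => false


/-! ### Auxiliary lemmas -/

lemma topJ_concat (l : List ℕ) (x : ℕ) : topJ (l ++ [x]) = x := by simp [topJ]

lemma topI_concat (l : List ℕ) (x : ℕ) : topI (l ++ [x]) = topJ l := by
  simp [topI, topJ]

lemma decomp1 {σ : List ℕ} (h : σ ≠ []) : σ.dropLast ++ [topJ σ] = σ := by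
  have : topJ σ = σ.getLast h := by
    rw [topJ, List.getLastD_eq_getLast?, List.getLast?_eq_getLast h]; rfl
  rw [this, List.dropLast_append_getLast]

lemma decomp2 {σ : List ℕ} (h : 2 ≤ σ.length) :
    σ.dropLast.dropLast ++ [topI σ, topJ σ] = σ := by
  have h1 : σ ≠ [] := by intro e; subst e; simp at h
  have h2 : σ.dropLast ≠ [] := by
    intro e
    have := List.length_dropLast (xs := σ)
    rw [e] at this; simp at this; omega
  have h3 : topI σ = topJ σ.dropLast := rfl
  rw [h3]
  have : σ.dropLast.dropLast ++ [topJ σ.dropLast, topJ σ]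
      = (σ.dropLast.dropLast ++ [topJ σ.dropLast]) ++ [topJ σ] := by simp
  rw [this, decomp1 h2, decomp1 h1]

lemma topJ_mem {σ : List ℕ} (h : σ ≠ []) : topJ σ ∈ σ := by
  have e : topJ σ = σ.getLast h := by
    rw [topJ, List.getLastD_eq_getLast?, List.getLast?_eq_getLast h]; rfl
  rw [e]; exact List.getLast_mem h

lemma mem_le_topJ {σ : List ℕ} (hs : σ.Pairwise (· < ·)) (hne : σ ≠ []) {x : ℕ}
    (hx : x ∈ σ) : x ≤ topJ σ := by
  have hs' : (σ.dropLast ++ [topJ σ]).Pairwise (· < ·) := by rw [decomp1 hne]; exact hs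
  rw [← decomp1 hne] at hx
  rcases List.mem_append.1 hx with h | h
  · have := (List.pairwise_append.1 hs').2.2 x h (topJ σ) (by simp)
    omega
  · simp at h; omega

lemma stack_facts {σ : List ℕ} (hs : σ.Pairwise (· < ·)) (hl : 2 ≤ σ.length) :
    (∀ x ∈ σ.dropLast.dropLast, x < topI σ) ∧ topI σ < topJ σ := by
  have hs' : (σ.dropLast.dropLast ++ [topI σ, topJ σ]).Pairwise (· < ·) := by
    rw [decomp2 hl]; exact hs
  have h := List.pairwise_append.1 hs'
  refine ⟨fun x hx => h.2.2 x hx (topI σ) (by simp), ?_⟩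
  have := h.2.1
  simp [List.pairwise_cons] at this
  exact this

lemma mem_stack_iff {σ : List ℕ} (hl : 2 ≤ σ.length) (x : ℕ) :
    x ∈ σ ↔ x ∈ σ.dropLast.dropLast ∨ x = topI σ ∨ x = topJ σ := by
  conv_lhs => rw [← decomp2 hl]
  simp

lemma sorted_dropLast2 {σ : List ℕ} (hs : σ.Pairwise (· < ·)) (hl : 2 ≤ σ.length) :
    σ.dropLast.dropLast.Pairwise (· < ·) := by
  have hs' : (σ.dropLast.dropLast ++ [topI σ, topJ σ]).Pairwise (· < ·) := by
    rw [decomp2 hl]; exact hs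
  exact (List.pairwise_append.1 hs').1

/-- Preservation of the stack invariant by one step. -/
lemma inv_step {n : ℕ} {c c' : Config N}
    (hs : c.σ.Pairwise (· < ·)) (hne : c.σ ≠ []) (hstep : Step n c c') :
    c'.σ.Pairwise (· < ·) ∧ c'.σ ≠ [] ∧ 2 ≤ c'.σ.length := by
  obtain ⟨a, happ, rfl⟩ := hstep
  cases a with
  | sh =>
    refine ⟨?_, by simp [doAct], ?_⟩
    · show (c.σ ++ [topJ c.σ + 1]).Pairwise (· < ·)
      refine List.pairwise_append.2 ⟨hs, by simp, ?_⟩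
      intro x hx y hy
      simp at hy; subst hy
      have := mem_le_topJ hs hne hx
      omega
    · show 2 ≤ (c.σ ++ [topJ c.σ + 1]).length
      rw [List.length_append]
      have := List.length_pos_iff.2 hne
      simp; omega
  | comb =>
    obtain ⟨_, hl3⟩ := happ
    have hl2 : 2 ≤ c.σ.length := by omega
    obtain ⟨hfacts, hij⟩ := stack_facts hs hl2
    refine ⟨?_, by simp [doAct], ?_⟩
    · show (c.σ.dropLast.dropLast ++ [topJ c.σ]).Pairwise (· < ·)
      refine List.pairwise_append.2 ⟨sorted_dropLast2 hs hl2, by simp, ?_⟩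
      intro x hx y hy
      simp at hy; subst hy
      have := hfacts x hx
      omega
    · show 2 ≤ (c.σ.dropLast.dropLast ++ [topJ c.σ]).length
      rw [List.length_append]
      have : c.σ.dropLast.dropLast.length = c.σ.length - 2 := by simp; omega
      simp; omega
  | label X => exact ⟨hs, hne, happ.2⟩
  | nolabel => exact ⟨hs, hne, happ.2.1⟩

/-- Invariant of valid configurations. -/
lemma valid_inv {n : ℕ} {c : Config N} (hc : Valid n c) :
    c.σ.Pairwise (· < ·) ∧ c.σ ≠ [] ∧ (2 ≤ c.σ.length ∨ c = initial N) := by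
  induction hc with
  | refl => exact ⟨by simp [initial], by simp [initial], Or.inr rfl⟩
  | tail _ hstep ih =>
    obtain ⟨hs, hne, _⟩ := ih
    obtain ⟨hs', hne', hl'⟩ := inv_step hs hne hstep
    exact ⟨hs', hne', Or.inl hl'⟩

open Classical in
lemma mem_reach {tG : Finset (N × ℕ × ℕ)} {c : Config N} (hl : 2 ≤ c.σ.length)
    (b : N × ℕ × ℕ) :
    b ∈ reach tG c ↔ b ∈ tG ∧
      (((if Even c.z then SEnc (topI c.σ, topJ c.σ) (span b)
         else Enc (topI c.σ, topJ c.σ) (span b)) ∧ (span b).1 ∈ c.σ) ∨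
       topJ c.σ ≤ (span b).1) := by
  rw [reach, if_neg (by omega)]
  simp only [leftSet, rightSet, Finset.mem_union, Finset.mem_filter]
  tauto

lemma reach_sh {n : ℕ} {tG : Finset (N × ℕ × ℕ)} (hG : IsGold n tG) {c : Config N}
    (hs : c.σ.Pairwise (· < ·)) (hl : 2 ≤ c.σ.length) (hev : Even c.z)
    {b : N × ℕ × ℕ} (hnext : IsNext tG c b) (hq : topJ c.σ < (span b).2) :
    reach tG (doAct c Action.sh) = reach tG c := by
  classical
  obtain ⟨hfacts, hij⟩ := stack_facts hs hl
  obtain ⟨hbmem, hbmin⟩ := hnext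
  have hσ' : (doAct c Action.sh).σ = c.σ ++ [topJ c.σ + 1] := rfl
  have hlen' : 2 ≤ (doAct c Action.sh).σ.length := by
    rw [hσ', List.length_append]; simp; omega
  have htJ' : topJ (doAct c Action.sh).σ = topJ c.σ + 1 := by rw [hσ', topJ_concat]
  have htI' : topI (doAct c Action.sh).σ = topJ c.σ := by rw [hσ', topI_concat]
  have hz' : ¬ Even (doAct c Action.sh).z := by
    simp [doAct, Nat.even_add_one, hev]
  ext b'
  rw [mem_reach hlen', mem_reach hl, if_neg hz', if_pos hev, htI', htJ', hσ']
  obtain ⟨X', p', q'⟩ := b'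
  simp only [span, Enc, SEnc, ne_eq, Prod.mk.injEq, not_and]
  constructor
  · rintro ⟨hG', h⟩
    refine ⟨hG', ?_⟩
    rcases h with ⟨⟨hp, _, hq'⟩, hmem⟩ | hr
    · have hpmem : p' ∈ c.σ := by
        rcases List.mem_append.1 hmem with h | h
        · exact h
        · simp at h; omega
      by_cases hpj : p' = topJ c.σ
      · right; omega
      · left
        have hple : p' ≤ topI c.σ := by
          rcases (mem_stack_iff hl p').1 hpmem with h | h | h
          · have := hfacts p' h; omega
          · omega
          · omega
        exact ⟨⟨⟨hple, hij, by omega⟩, by omega⟩, hpmem⟩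
    · right; omega
  · rintro ⟨hG', h⟩
    refine ⟨hG', ?_⟩
    rcases h with ⟨⟨⟨hp, _, hq'⟩, hne⟩, hmem⟩ | hr
    · left
      have hmin := hbmin (X', p', q') (Finset.mem_filter.2 ⟨hG', by
        rw [if_pos hev]
        exact ⟨⟨⟨hp, hij, hq'⟩, by simpa [SEnc, Enc, Prod.ext_iff, span] using hne⟩, hmem⟩⟩)
      obtain ⟨hm1, hm2, hm3⟩ := hmin
      simp only [span] at hm1 hm2 hm3 hq
      refine ⟨⟨by omega, by omega, by omega⟩, List.mem_append.2 (Or.inl hmem)⟩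
    · by_cases hpj : p' = topJ c.σ
      · left
        have hv := hG.validSpans (X', p', q') hG'
        simp only [span] at hv
        have hjmem : topJ c.σ ∈ c.σ := (mem_stack_iff hl _).2 (Or.inr (Or.inr rfl))
        refine ⟨⟨by omega, by omega, by omega⟩, List.mem_append.2 (Or.inl (by rwa [hpj]))⟩
      · right; omega

lemma reach_comb {n : ℕ} {tG : Finset (N × ℕ × ℕ)} (hG : IsGold n tG) {c : Config N}
    (hs : c.σ.Pairwise (· < ·)) (hl : 2 ≤ c.σ.length) (hev : Even c.z)
    {b : N × ℕ × ℕ} (hnext : IsNext tG c b) (hp : (span b).1 < topI c.σ) :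
    reach tG (doAct c Action.comb) = reach tG c := by
  classical
  obtain ⟨hfacts, hij⟩ := stack_facts hs hl
  obtain ⟨hbmem, hbmin⟩ := hnext
  have hbfacts := Finset.mem_filter.1 hbmem
  rw [if_pos hev] at hbfacts
  obtain ⟨hbG, ⟨hbenc, _⟩, hbσ⟩ := hbfacts
  -- (span b).1 ∈ dropLast.dropLast
  have hbdd : (span b).1 ∈ c.σ.dropLast.dropLast := by
    rcases (mem_stack_iff hl _).1 hbσ with h | h | h
    · exact h
    · omega
    · omega
  have hddne : c.σ.dropLast.dropLast ≠ [] := by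
    intro e; rw [e] at hbdd; simp at hbdd
  have hsdd : c.σ.dropLast.dropLast.Pairwise (· < ·) := sorted_dropLast2 hs hl
  have hi2mem : topJ c.σ.dropLast.dropLast ∈ c.σ.dropLast.dropLast := topJ_mem hddne
  have hi2lt : topJ c.σ.dropLast.dropLast < topI c.σ := hfacts _ hi2mem
  have hσ' : (doAct c Action.comb).σ = c.σ.dropLast.dropLast ++ [topJ c.σ] := rfl
  have hlen' : 2 ≤ (doAct c Action.comb).σ.length := by
    rw [hσ', List.length_append]
    have := List.length_pos_iff.2 hddne
    have h1 : ([topJ c.σ] : List ℕ).length = 1 := rfl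
    omega
  have htJ' : topJ (doAct c Action.comb).σ = topJ c.σ := by rw [hσ', topJ_concat]
  have htI' : topI (doAct c Action.comb).σ = topJ c.σ.dropLast.dropLast := by
    rw [hσ', topI_concat]
  have hz' : ¬ Even (doAct c Action.comb).z := by
    simp [doAct, Nat.even_add_one, hev]
  ext b'
  rw [mem_reach hlen', mem_reach hl, if_neg hz', if_pos hev, htI', htJ', hσ']
  obtain ⟨X', p', q'⟩ := b'
  simp only [span, Enc, SEnc, ne_eq, Prod.mk.injEq, not_and]
  constructor
  · rintro ⟨hG', h⟩
    refine ⟨hG', ?_⟩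
    rcases h with ⟨⟨hp', _, hq'⟩, hmem⟩ | hr
    · left
      have hpdd : p' ∈ c.σ.dropLast.dropLast := by
        rcases List.mem_append.1 hmem with h | h
        · exact h
        · simp at h; omega
      have hple : p' < topI c.σ := lt_of_le_of_lt hp' hi2lt
      exact ⟨⟨⟨by omega, hij, hq'⟩, by omega⟩,
        (mem_stack_iff hl _).2 (Or.inl hpdd)⟩
    · right; omega
  · rintro ⟨hG', h⟩
    refine ⟨hG', ?_⟩
    rcases h with ⟨⟨⟨hp', _, hq'⟩, hne⟩, hmem⟩ | hr
    · left
      have hmin := hbmin (X', p', q') (Finset.mem_filter.2 ⟨hG', by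
        rw [if_pos hev]
        exact ⟨⟨⟨hp', hij, hq'⟩, by simpa [SEnc, Enc, Prod.ext_iff, span] using hne⟩, hmem⟩⟩)
      obtain ⟨hm1, hm2, hm3⟩ := hmin
      simp only [span] at hm1 hm2 hm3 hp
      have hplt : p' < topI c.σ := by omega
      have hpdd : p' ∈ c.σ.dropLast.dropLast := by
        rcases (mem_stack_iff hl _).1 hmem with h | h | h
        · exact h
        · omega
        · omega
      have : p' ≤ topJ c.σ.dropLast.dropLast := mem_le_topJ hsdd hddne hpdd
      exact ⟨⟨by omega, by omega, hq'⟩, List.mem_append.2 (Or.inl hpdd)⟩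
    · right; omega


/-- Lemma 3, first part: oracle actions preserve the optimal tree:
`t*(τ(c)) = t*(c)` for every `τ ∈ dyna(c)`. -/
theorem tstar_preserved_by_dyna (n : ℕ) (hn : 1 ≤ n) (tG : Finset (N × ℕ × ℕ))
    (hG : IsGold n tG) (c : Config N) (hc : Valid n c) (hnf : ¬ Final n c)
    (a : Action N) (ha : Dyna tG c a) :
    tstar tG (doAct c a) = tstar tG c := by
  classical
  obtain ⟨hs, hne, hlor⟩ := valid_inv hc
  rw [Dyna] at ha
  by_cases hlt : c.σ.length < 2
  · rw [if_pos hlt] at ha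
    subst ha
    have hcinit : c = initial N := by
      rcases hlor with h | h
      · omega
      · exact h
    subst hcinit
    have h1 : tstar tG (initial N) = tG := by
      rw [tstar, reach, if_pos (by simp [initial])]
      simp [initial]
    rw [h1]
    have hc' : doAct (initial N) Action.sh = ⟨1, [0, 1], ∅⟩ := rfl
    rw [hc', tstar, reach, if_neg (by simp)]
    ext b
    obtain ⟨X, p, q⟩ := b
    simp only [leftSet, rightSet, Finset.mem_union, Finset.mem_filter]
    simp only [Finset.notMem_empty, span, Enc, false_or]
    have hti : topI ([0, 1] : List ℕ) = 0 := rfl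
    have htj : topJ ([0, 1] : List ℕ) = 1 := rfl
    rw [if_neg (by decide), hti, htj]
    constructor
    · rintro (⟨hb, _⟩ | ⟨hb, _⟩) <;> exact hb
    · intro hb
      have hv := hG.validSpans (X, p, q) hb
      simp only [span] at hv
      rcases Nat.eq_zero_or_pos p with h | h
      · exact Or.inl ⟨hb, ⟨by omega, by omega, by omega⟩, by simp [h]⟩
      · exact Or.inr ⟨hb, by omega⟩
  · rw [if_neg hlt] at ha
    have hl2 : 2 ≤ c.σ.length := by omega
    obtain ⟨hfacts, hij⟩ := stack_facts hs hl2
    by_cases hev : Even c.z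
    · rw [if_pos hev] at ha
      obtain ⟨b, hnext, hcase⟩ := ha
      have key : (a = Action.sh ∧ topJ c.σ < (span b).2) ∨
          (a = Action.comb ∧ (span b).1 < topI c.σ) := by
        rcases hcase with ⟨_, h2, rfl⟩ | ⟨h1, _, rfl⟩ | ⟨h1, h2, rfl | rfl⟩
        · exact Or.inl ⟨rfl, h2⟩
        · exact Or.inr ⟨rfl, h1⟩
        · exact Or.inl ⟨rfl, h2⟩
        · exact Or.inr ⟨rfl, h1⟩
      rcases key with ⟨rfl, hq⟩ | ⟨rfl, hp⟩
      · rw [tstar, tstar, reach_sh hG hs hl2 hev hnext hq]; rfl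
      · rw [tstar, tstar, reach_comb hG hs hl2 hev hnext hp]; rfl
    · rw [if_neg hev] at ha
      have hiσ : topI c.σ ∈ c.σ := (mem_stack_iff hl2 _).2 (Or.inr (Or.inl rfl))
      rcases ha with ⟨X, hX, rfl⟩ | ⟨hno, rfl⟩
      · -- label X
        have hz' : Even (doAct (N := N) c (Action.label X)).z := by
          simpa [doAct, Nat.even_add_one] using hev
        have hσ' : (doAct (N := N) c (Action.label X)).σ = c.σ := rfl
        have hl2' : 2 ≤ (doAct (N := N) c (Action.label X)).σ.length := by
          rw [hσ']; exact hl2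
        ext b'
        rw [tstar, tstar, Finset.mem_union, Finset.mem_union,
          mem_reach hl2' b', mem_reach hl2 b', if_pos hz', if_neg hev, hσ']
        show b' ∈ insert (X, topI c.σ, topJ c.σ) c.t ∨ _ ↔ _
        rw [Finset.mem_insert]
        obtain ⟨X', p', q'⟩ := b'
        simp only [span, SEnc, Enc, ne_eq, Prod.mk.injEq, not_and]
        constructor
        · rintro ((heq | ht) | ⟨hG', h⟩)
          · obtain ⟨rfl, rfl, rfl⟩ := heq
            exact Or.inr ⟨hX, Or.inl ⟨⟨le_refl _, hij, le_refl _⟩, hiσ⟩⟩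
          · exact Or.inl ht
          · refine Or.inr ⟨hG', ?_⟩
            rcases h with ⟨⟨henc, _⟩, hmem⟩ | hr
            · exact Or.inl ⟨henc, hmem⟩
            · exact Or.inr hr
        · rintro (ht | ⟨hG', h⟩)
          · exact Or.inl (Or.inr ht)
          · rcases h with ⟨⟨hp', hij', hq'⟩, hmem⟩ | hr
            · by_cases hsame : p' = topI c.σ ∧ q' = topJ c.σ
              · left; left
                have := hG.distinctSpans (X', p', q') hG' (X, topI c.σ, topJ c.σ) hX
                  (by simp [span, hsame.1, hsame.2])
                simpa using this
              · refine Or.inr ⟨hG', Or.inl ⟨⟨⟨hp', hij', hq'⟩, ?_⟩, hmem⟩⟩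
                intro h1 h2
                exact hsame ⟨h1.symm, h2.symm⟩
            · exact Or.inr ⟨hG', Or.inr hr⟩
      · -- nolabel
        have hz' : Even (doAct (N := N) c Action.nolabel).z := by
          simpa [doAct, Nat.even_add_one] using hev
        have hσ' : (doAct (N := N) c Action.nolabel).σ = c.σ := rfl
        have hl2' : 2 ≤ (doAct (N := N) c Action.nolabel).σ.length := by
          rw [hσ']; exact hl2
        ext b'
        rw [tstar, tstar, Finset.mem_union, Finset.mem_union,
          mem_reach hl2' b', mem_reach hl2 b', if_pos hz', if_neg hev, hσ']
        show b' ∈ c.t ∨ _ ↔ b' ∈ c.t ∨ _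
        obtain ⟨X', p', q'⟩ := b'
        simp only [span, SEnc, Enc, ne_eq, Prod.mk.injEq, not_and]
        constructor
        · rintro (ht | ⟨hG', h⟩)
          · exact Or.inl ht
          · refine Or.inr ⟨hG', ?_⟩
            rcases h with ⟨⟨henc, _⟩, hmem⟩ | hr
            · exact Or.inl ⟨henc, hmem⟩
            · exact Or.inr hr
        · rintro (ht | ⟨hG', h⟩)
          · exact Or.inl ht
          · refine Or.inr ⟨hG', ?_⟩
            rcases h with ⟨⟨hp', hij', hq'⟩, hmem⟩ | hr
            · refine Or.inl ⟨⟨⟨hp', hij', hq'⟩, ?_⟩, hmem⟩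
              intro h1 h2
              subst h1; subst h2
              exact hno X' hG'
            · exact Or.inr hr

end SpanParser
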